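/- Let V be a real vector space of finite odd dimension, ω an alternating bilinear form on V, and η a linear functional on V. Define the linear map ♭: V → V* by ♭(v) := ω(v, ·) + η(v)·η, and define the alternating bilinear form ω̂ on ℝ × V by ω̂((s, v), (s', v')) := ω(v, v') + s·η(v') − s'·η(v). Then ♭ is bijective if and only if ω̂ is nondegenerate. -/

import Mathlib

open Module

/-- An alternating bilinear form on an odd-dimensional real vector space has a
nontrivial radical. -/
lemma exists_radical_of_odd
    (V : Type*) [AddCommGroup V] [Module ℝ V] [FiniteDimensional ℝ V]
    (hodd : Odd (Module.finrank ℝ V))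
    (ω : V →ₗ[ℝ] V →ₗ[ℝ] ℝ) (halt : ∀ v : V, ω v v = 0) :
    ∃ v : V, v ≠ 0 ∧ ∀ w : V, ω v w = 0 := by
  have hskew : ∀ v w : V, ω w v = -ω v w := by
    intro v w
    have h := halt (v + w)
    simp only [map_add, LinearMap.add_apply, halt] at h
    linarith
  classical
  let b := Module.finBasis ℝ V
  set M := BilinForm.toMatrix b ω with hM
  have hMT : Matrix.transpose M = -M := by
    ext i j
    simp only [Matrix.transpose_apply, Matrix.neg_apply, hM,
      BilinForm.toMatrix_apply]
    exact hskew _ _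
  have hdet : M.det = 0 := by
    have h1 : M.det = (-M).det := by rw [← hMT, Matrix.det_transpose]
    rw [Matrix.det_neg, Fintype.card_fin] at h1
    rw [Odd.neg_one_pow hodd] at h1
    linarith
  have hnd : ¬ LinearMap.BilinForm.Nondegenerate ω := by
    intro h
    have := (LinearMap.BilinForm.nondegenerate_toMatrix_iff (B := ω) b).mpr h
    exact this.det_ne_zero hdet
  have hrefl : ω.IsRefl := fun x y h => by rw [hskew, h, neg_zero]
  unfold LinearMap.BilinForm.Nondegenerate at hnd
  rw [LinearMap.IsRefl.nondegenerate_iff_separatingLeft hrefl] at hnd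
  unfold LinearMap.SeparatingLeft at hnd
  push_neg at hnd
  obtain ⟨v, hv1, hv2⟩ := hnd
  exact ⟨v, hv2, hv1⟩

/-- Pointwise content of Lemma 2.1 of the paper: for an odd-(finite-)dimensional real vector
space `V`, an alternating bilinear form `ω` and a linear functional `η` on `V`, the map
`♭(v) = ω(v, ·) + η(v)·η` is bijective if and only if the alternating bilinear form
`ω̂((s, v), (s', v')) = ω(v, v') + s·η(v') − s'·η(v)` on `ℝ × V` is nondegenerate. -/
theorem cosymplectic_iff_symplectic_on_prod
    (V : Type*) [AddCommGroup V] [Module ℝ V] [FiniteDimensional ℝ V]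
    (hodd : Odd (Module.finrank ℝ V))
    (ω : V →ₗ[ℝ] V →ₗ[ℝ] ℝ) (halt : ∀ v : V, ω v v = 0)
    (η : V →ₗ[ℝ] ℝ)
    (flat : V →ₗ[ℝ] (V →ₗ[ℝ] ℝ))
    (hflat : ∀ v w : V, flat v w = ω v w + η v * η w)
    (Ω : ℝ × V → ℝ × V → ℝ)
    (hΩ : ∀ (s s' : ℝ) (v v' : V), Ω (s, v) (s', v') = ω v v' + s * η v' - s' * η v) :
    Function.Bijective flat ↔ ∀ z : ℝ × V, (∀ z' : ℝ × V, Ω z z' = 0) → z = 0 := by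
  constructor
  · rintro hbij ⟨s, v⟩ hz
    -- first get an element `e` with `ω e = 0` and `η e = 1`
    obtain ⟨v₀, hv₀ne, hv₀⟩ := exists_radical_of_odd V hodd ω halt
    have hηv₀ : η v₀ ≠ 0 := by
      intro h
      apply hv₀ne
      apply hbij.injective
      rw [map_zero]
      ext w
      simp [hflat, hv₀, h]
    set e : V := (η v₀)⁻¹ • v₀ with he
    have hωe : ∀ w : V, ω e w = 0 := by
      intro w; simp [he, hv₀]
    have hηe : η e = 1 := by
      simp [he, inv_mul_cancel₀ hηv₀]
    have hflate : flat e = η := by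
      ext w; simp [hflat, hωe, hηe]
    -- `η v = 0`
    have hηv : η v = 0 := by
      have h1 := hz (1, 0)
      rw [hΩ] at h1
      simpa using h1
    -- `flat v = (-s) • η`
    have hfv : flat v = flat ((-s) • e) := by
      ext w
      have h1 := hz (0, w)
      rw [hΩ] at h1
      simp only [zero_mul, sub_zero] at h1
      simp only [map_smul, hflate, LinearMap.smul_apply, smul_eq_mul, hflat, hηv, zero_mul,
        add_zero]
      linarith
    have hv : v = (-s) • e := hbij.injective hfv
    have hs : s = 0 := by
      have := congrArg η hv
      rw [hηv, map_smul, hηe] at this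
      simpa using this.symm
    have : v = 0 := by rw [hv, hs]; simp
    simp [hs, this, Prod.ext_iff]
  · intro hnd
    have hinj : Function.Injective flat := by
      rw [injective_iff_map_eq_zero]
      intro v hv
      have hηv : η v = 0 := by
        have h1 : flat v v = 0 := by rw [hv]; rfl
        rw [hflat, halt, zero_add] at h1
        exact pow_eq_zero_iff (n := 2) two_ne_zero |>.mp (by rw [sq]; exact h1)
      have hz : ((0 : ℝ), v) = (0 : ℝ × V) := by
        apply hnd
        rintro ⟨s', v'⟩
        rw [hΩ]
        have h2 : flat v v' = 0 := by rw [hv]; rfl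
        rw [hflat, hηv] at h2
        rw [hηv]
        linarith
      exact congrArg Prod.snd hz
    refine ⟨hinj, ?_⟩
    rw [← LinearMap.injective_iff_surjective_of_finrank_eq_finrank
      (Subspace.dual_finrank_eq (K := ℝ) (V := V)).symm]
    exact hinj
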